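/- Let p_1, ..., p_n ∈ R^d affinely span R^d and suppose 0 lies in the interior of P = conv{p_1,...,p_n}. Then there exists a unique y in the interior of the polar body P° such that Σ_{i=1}^n p_i/(1 + ⟨p_i, y⟩) = 0. -/

import Mathlib

open scoped RealInnerProductSpace

section Aux

private lemma aux_alg {A B : ℝ} (hA : A ≠ 0) (hB : B ≠ 0) :
    (A⁻¹ - B⁻¹) * (B - A) = (B - A) ^ 2 * (A * B)⁻¹ := by
  field_simp

variable {d n : ℕ} (p : Fin n → EuclideanSpace ℝ (Fin d))

private lemma aux_U_subset_S {y : EuclideanSpace ℝ (Fin d)}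
    (hy : ∀ i, -1 < ⟪p i, y⟫) :
    ∀ x ∈ convexHull ℝ (Set.range p), -1 ≤ ⟪x, y⟫ := by
  intro x hx
  have hconv : Convex ℝ {w : EuclideanSpace ℝ (Fin d) | -1 ≤ ⟪w, y⟫} := by
    intro a ha b hb s t hs ht hst
    simp only [Set.mem_setOf_eq] at ha hb ⊢
    rw [inner_add_left, real_inner_smul_left, real_inner_smul_left]
    nlinarith
  have hsub : Set.range p ⊆ {w : EuclideanSpace ℝ (Fin d) | -1 ≤ ⟪w, y⟫} := by
    rintro _ ⟨i, rfl⟩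
    exact (hy i).le
  exact convexHull_min hsub hconv hx

private lemma aux_interior_eq :
    interior {z : EuclideanSpace ℝ (Fin d) |
        ∀ x ∈ convexHull ℝ (Set.range p), -1 ≤ ⟪x, z⟫}
      = {z : EuclideanSpace ℝ (Fin d) | ∀ i, -1 < ⟪p i, z⟫} := by
  set S : Set (EuclideanSpace ℝ (Fin d)) :=
    {z | ∀ x ∈ convexHull ℝ (Set.range p), -1 ≤ ⟪x, z⟫} with hS
  set U : Set (EuclideanSpace ℝ (Fin d)) := {z | ∀ i, -1 < ⟪p i, z⟫} with hU
  have hUopen : IsOpen U := by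
    have : U = ⋂ i, (fun z : EuclideanSpace ℝ (Fin d) => ⟪p i, z⟫) ⁻¹' Set.Ioi (-1) := by
      ext z; simp [hU]
    rw [this]
    exact isOpen_iInter_of_finite fun i =>
      (isOpen_Ioi).preimage (continuous_const.inner continuous_id)
  apply Set.Subset.antisymm
  · intro y hy
    intro i
    have hyS : y ∈ S := interior_subset hy
    have hle : -1 ≤ ⟪p i, y⟫ := hyS (p i) (subset_convexHull ℝ _ ⟨i, rfl⟩)
    rcases lt_or_eq_of_le hle with h | h
    · exact h
    -- boundary case: ⟪p i, y⟫ = -1, contradiction with interior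
    exfalso
    have htend : Filter.Tendsto (fun t : ℝ => (1 + t) • y) (nhdsWithin 0 (Set.Ioi 0)) (nhds y) := by
      have hc : Continuous (fun t : ℝ => (1 + t) • y) :=
        Continuous.smul (continuous_const.add continuous_id) continuous_const
      have h1 := hc.tendsto (0 : ℝ)
      simp only [add_zero, one_smul] at h1
      exact (by simpa using h1 : Filter.Tendsto (fun t : ℝ => (1 + t) • y) (nhds 0) (nhds y)).mono_left
        nhdsWithin_le_nhds
    have hSnhds : S ∈ nhds y := mem_interior_iff_mem_nhds.1 hy
    have hev : ∀ᶠ t : ℝ in nhdsWithin 0 (Set.Ioi 0), (1 + t) • y ∈ S := htend.eventually hSnhds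
    obtain ⟨t, hmem, ht⟩ := (hev.and self_mem_nhdsWithin).exists
    have := hmem (p i) (subset_convexHull ℝ _ ⟨i, rfl⟩)
    rw [real_inner_smul_right, ← h] at this
    have ht' : (0 : ℝ) < t := ht
    nlinarith
  · intro y hy
    exact interior_maximal (fun z hz => aux_U_subset_S p hz) hUopen hy

end Aux

/-- existence and uniqueness of `y` in the interior of the polar body
with `Σ p_i / (1 + ⟨p_i, y⟩) = 0`. -/
theorem existsUnique_centering_point
    (d n : ℕ) (p : Fin n → EuclideanSpace ℝ (Fin d))
    (hspan : affineSpan ℝ (Set.range p) = ⊤)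
    (h0 : (0 : EuclideanSpace ℝ (Fin d)) ∈
      interior (convexHull ℝ (Set.range p))) :
    ∃! y : EuclideanSpace ℝ (Fin d),
      y ∈ interior {z : EuclideanSpace ℝ (Fin d) |
        ∀ x ∈ convexHull ℝ (Set.range p), -1 ≤ ⟪x, z⟫} ∧
      ∑ i, (1 + ⟪p i, y⟫)⁻¹ • p i = 0 := by
  classical
  let E := EuclideanSpace ℝ (Fin d)
  set S : Set (EuclideanSpace ℝ (Fin d)) := {z | ∀ x ∈ convexHull ℝ (Set.range p), -1 ≤ ⟪x, z⟫} with hSdef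
  have hint : interior S = {z : E | ∀ i, -1 < ⟪p i, z⟫} := aux_interior_eq p
  -- linear span is everything
  have hspan' : Submodule.span ℝ (Set.range p) = ⊤ := by
    rw [eq_top_iff]
    intro x _
    exact affineSpan_subset_span (by rw [hspan]; exact AffineSubspace.mem_top ℝ _ x)
  -- key orthogonality fact
  have horth : ∀ v : E, (∀ i, ⟪p i, v⟫ = 0) → v = 0 := by
    intro v hv
    have hle : Submodule.span ℝ (Set.range p) ≤ (ℝ ∙ v)ᗮ := by
      rw [Submodule.span_le]
      rintro _ ⟨i, rfl⟩
      exact Submodule.mem_orthogonal_singleton_iff_inner_right.2 (by rw [real_inner_comm]; exact hv i)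
    rw [hspan'] at hle
    have hvmem : v ∈ (ℝ ∙ v)ᗮ := hle Submodule.mem_top
    have := Submodule.mem_orthogonal_singleton_iff_inner_right.1 hvmem
    exact inner_self_eq_zero.1 this
  -- S is closed
  have hSclosed : IsClosed S := by
    have : S = ⋂ x ∈ convexHull ℝ (Set.range p), {z : E | -1 ≤ ⟪x, z⟫} := by
      ext z; simp [hSdef]; exact Iff.rfl
    rw [this]
    exact isClosed_biInter fun x hx =>
      isClosed_le continuous_const (continuous_const.inner continuous_id)
  -- S is bounded
  have hSbdd : Bornology.IsBounded S := by
    obtain ⟨ε, hε, hball⟩ := Metric.mem_nhds_iff.1 (mem_interior_iff_mem_nhds.1 h0)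
    rw [isBounded_iff_forall_norm_le]
    refine ⟨2 / ε, fun z hz => ?_⟩
    rcases eq_or_ne z 0 with rfl | hz0
    · simp; positivity
    · have hz' : (0 : ℝ) < ‖z‖ := norm_pos_iff.2 hz0
      set x : E := -((ε / 2) / ‖z‖) • z with hx
      have hxball : x ∈ Metric.ball (0 : E) ε := by
        rw [Metric.mem_ball, dist_zero_right, hx, norm_smul]
        rw [norm_neg, Real.norm_eq_abs, abs_of_nonneg (by positivity)]
        rw [div_mul_cancel₀ _ (ne_of_gt hz')]
        linarith
      have hinner := hz x (hball hxball)
      rw [hx, real_inner_smul_left, real_inner_self_eq_norm_sq] at hinner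
      have h1 : (ε / 2) / ‖z‖ * ‖z‖ ^ 2 = (ε / 2) * ‖z‖ := by
        field_simp
      rw [neg_mul, h1] at hinner
      rw [le_div_iff₀ hε]
      nlinarith
  have hScompact : IsCompact S := Metric.isCompact_of_isClosed_isBounded hSclosed hSbdd
  have h0S : (0 : E) ∈ S := by
    intro x hx
    rw [inner_zero_right]
    norm_num
  -- the product function
  set F : E → ℝ := fun y => ∏ i, (1 + ⟪p i, y⟫) with hFdef
  have hFcont : Continuous F :=
    continuous_finset_prod _ fun i _ => continuous_const.add (continuous_const.inner continuous_id)
  obtain ⟨y, hyS, hymax⟩ := hScompact.exists_isMaxOn ⟨0, h0S⟩ hFcont.continuousOn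
  have hF0 : F 0 = 1 := by
    simp only [hFdef, inner_zero_right, add_zero, Finset.prod_const_one]
  have hFy1 : (1 : ℝ) ≤ F y := by
    have := hymax h0S
    simpa [hF0] using this
  have hFypos : 0 < F y := lt_of_lt_of_le one_pos hFy1
  -- each factor is positive
  have hfac : ∀ i, 0 < 1 + ⟪p i, y⟫ := by
    intro i
    have hge : -1 ≤ ⟪p i, y⟫ := hyS (p i) (subset_convexHull ℝ _ ⟨i, rfl⟩)
    rcases lt_or_eq_of_le hge with h | h
    · linarith
    · exfalso
      have : F y = 0 := Finset.prod_eq_zero (Finset.mem_univ i) (by rw [← h]; ring)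
      rw [this] at hFypos; exact lt_irrefl 0 hFypos
  have hyU : y ∈ interior S := by
    rw [hint]; exact fun i => by linarith [hfac i]
  -- local max, derivative zero
  have hlocmax : IsLocalMax F y :=
    hymax.isLocalMax (mem_interior_iff_mem_nhds.1 hyU)
  have hderiv : HasFDerivAt F
      (∑ i, (∏ j ∈ Finset.univ.erase i, (1 + ⟪p j, y⟫)) •
        (innerSL ℝ (p i) : E →L[ℝ] ℝ)) y := by
    exact HasFDerivAt.finset_prod fun i _ =>
      ((innerSL ℝ (p i)).hasFDerivAt (x := y)).const_add 1
  have hzero := hlocmax.hasFDerivAt_eq_zero hderiv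
  -- translate to the sum equation
  have heq : ∑ i, (1 + ⟪p i, y⟫)⁻¹ • p i = 0 := by
    set w : E := ∑ i, (1 + ⟪p i, y⟫)⁻¹ • p i with hw
    have happ : ∑ i, (∏ j ∈ Finset.univ.erase i, (1 + ⟪p j, y⟫)) * ⟪p i, w⟫ = 0 := by
      have := congrArg (fun L : E →L[ℝ] ℝ => L w) hzero
      simpa using this
    have hprod : ∀ i, (∏ j ∈ Finset.univ.erase i, (1 + ⟪p j, y⟫))
        = F y * (1 + ⟪p i, y⟫)⁻¹ := by
      intro i
      have hme := Finset.mul_prod_erase Finset.univ (fun j => 1 + ⟪p j, y⟫) (Finset.mem_univ i)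
      have hdivd : (∏ j ∈ Finset.univ.erase i, (1 + ⟪p j, y⟫)) = F y / (1 + ⟪p i, y⟫) := by
        rw [eq_div_iff (hfac i).ne', mul_comm]
        exact hme
      rw [hdivd, div_eq_mul_inv]
    have hsum : F y * ∑ i, (1 + ⟪p i, y⟫)⁻¹ * ⟪p i, w⟫ = 0 := by
      rw [Finset.mul_sum]
      rw [← happ]
      apply Finset.sum_congr rfl
      intro i _
      rw [hprod i]; ring
    have hsum' : ∑ i, (1 + ⟪p i, y⟫)⁻¹ * ⟪p i, w⟫ = 0 := by
      rcases mul_eq_zero.1 hsum with h | h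
      · exact absurd h hFypos.ne'
      · exact h
    have : ⟪w, w⟫ = 0 := by
      rw [hw]
      rw [sum_inner]
      rw [← hsum']
      apply Finset.sum_congr rfl
      intro i _
      rw [real_inner_smul_left]
    exact inner_self_eq_zero.1 this
  refine ⟨y, ⟨hyU, heq⟩, ?_⟩
  -- uniqueness
  rintro z ⟨hzU, hzeq⟩
  -- show z = y
  have hposz : ∀ i, 0 < 1 + ⟪p i, z⟫ := by
    rw [hint] at hzU
    intro i; linarith [hzU i]
  have hposy : ∀ i, 0 < 1 + ⟪p i, y⟫ := hfac
  set v : E := z - y with hv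
  have key : ∀ (u : E) (h : ∑ i, (1 + ⟪p i, u⟫)⁻¹ • p i = 0),
      ∑ i, (1 + ⟪p i, u⟫)⁻¹ * ⟪p i, v⟫ = 0 := by
    intro u h
    have := congrArg (fun w : E => ⟪w, v⟫) h
    simp only [inner_zero_left] at this
    rw [sum_inner] at this
    rw [← this]
    apply Finset.sum_congr rfl
    intro i _
    rw [real_inner_smul_left]
  have h1 := key y heq
  have h2 := key z hzeq
  have hdiff : ∑ i, ((1 + ⟪p i, y⟫)⁻¹ - (1 + ⟪p i, z⟫)⁻¹) * ⟪p i, v⟫ = 0 := by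
    have h3 : ∑ i, ((1 + ⟪p i, y⟫)⁻¹ - (1 + ⟪p i, z⟫)⁻¹) * ⟪p i, v⟫
        = (∑ i, (1 + ⟪p i, y⟫)⁻¹ * ⟪p i, v⟫) - ∑ i, (1 + ⟪p i, z⟫)⁻¹ * ⟪p i, v⟫ := by
      rw [← Finset.sum_sub_distrib]
      exact Finset.sum_congr rfl fun i _ => by ring
    rw [h3, h1, h2, sub_zero]
  have hb : ∀ i, ⟪p i, v⟫ = (1 + ⟪p i, z⟫) - (1 + ⟪p i, y⟫) := by
    intro i
    rw [hv, inner_sub_right]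
    ring
  have hterm : ∀ i, ((1 + ⟪p i, y⟫)⁻¹ - (1 + ⟪p i, z⟫)⁻¹) * ⟪p i, v⟫
      = ⟪p i, v⟫ ^ 2 * ((1 + ⟪p i, y⟫) * (1 + ⟪p i, z⟫))⁻¹ := by
    intro i
    rw [hb i]
    exact aux_alg (hposy i).ne' (hposz i).ne'
  have hnonneg : ∀ i ∈ Finset.univ, (0:ℝ) ≤
      ((1 + ⟪p i, y⟫)⁻¹ - (1 + ⟪p i, z⟫)⁻¹) * ⟪p i, v⟫ := by
    intro i _
    rw [hterm i]
    have := (hposy i); have := (hposz i)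
    positivity
  have hallzero : ∀ i, ⟪p i, v⟫ = 0 := by
    intro i
    have := (Finset.sum_eq_zero_iff_of_nonneg hnonneg).1 hdiff i (Finset.mem_univ i)
    rw [hterm i] at this
    have hne : ((1 + ⟪p i, y⟫) * (1 + ⟪p i, z⟫))⁻¹ ≠ 0 := by
      apply inv_ne_zero
      exact (mul_pos (hposy i) (hposz i)).ne'
    have : ⟪p i, v⟫ ^ 2 = 0 := by
      rcases mul_eq_zero.1 this with h | h
      · exact h
      · exact absurd h hne
    exact pow_eq_zero_iff (n := 2) (by norm_num) |>.1 this
  have : v = 0 := horth v hallzero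
  rw [hv, sub_eq_zero] at this
  exact this
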